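/- Let p ∈ (0,1], let M be a finite set with a distinguished point 0, and suppose M = M₁ ∪ M₂ with M₁ ∩ M₂ = {x₀}, x₀ ≠ 0, 0 ∈ M₂, |M₁| ≥ 2. Let T be a rooted spanning tree on (M, 0) obtained by gluing a rooted tree T₁ on (M₁, x₀) and a rooted tree T₂ on (M₂, 0) at the vertex x₀ (i.e., the edge set of T is the disjoint union of those of T₁ and T₂). Given a p-metric d on M and a ∈ ℝ^{M\{0}}, define T(a)^p := sum_{x ∈ M\{0}} |c_T(x,a) d(e_x^T)|^p where c_T(x,a) := sum_{y ∈ V_x^T} a_y. Then T(a)^p = T₁(a₁)^p + T₂(a₂)^p, where a₁ := a restricted to M₁ \ {x₀} and a₂ agrees with a on M₂ \ {0, x₀} while a₂(x₀) := sum_{z ∈ M₁} a(z). -/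
import Mathlib


open scoped Classical

/-- gluing lemma: if the rooted spanning tree `T` on `(M, 0)`
is obtained by gluing a rooted tree `T₁` on `(M₁, x₀)` and a rooted tree `T₂`
on `(M₂, 0)` at the vertex `x₀` (where `M = M₁ ∪ M₂`, `M₁ ∩ M₂ = {x₀}`), then
`T(a)^p = T₁(a₁)^p + T₂(a₂)^p`.  The tree `T` is encoded by its parent
function `par` (so `T₁`, `T₂` are its restrictions to `M₁`, `M₂`), subtrees
are `V_x = {y | ∃ k, par^[k] y = x}`, and `c_T(x,a) = ∑_{y ∈ V_x} a_y`. -/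
theorem stmt_16 (p : ℝ) (hp0 : 0 < p) (hp1 : p ≤ 1)
    {M : Type*} [Fintype M] [DecidableEq M] (base x₀ : M) (hx₀ : x₀ ≠ base)
    (d : M → M → ℝ)
    (hsym : ∀ u v, d u v = d v u) (hdiag : ∀ u, d u u = 0)
    (hpos : ∀ u v, u ≠ v → 0 < d u v)
    (htri : ∀ u v w, d u w ^ p ≤ d u v ^ p + d v w ^ p)
    (M₁ M₂ : Finset M) (hunion : M₁ ∪ M₂ = Finset.univ)
    (hinter : M₁ ∩ M₂ = {x₀}) (hbase : base ∈ M₂) (hM₁ : 2 ≤ M₁.card)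
    (par : M → M) (hpar0 : par base = base)
    (hreach : ∀ x, ∃ k, par^[k] x = base)
    (hclosed₁ : ∀ x ∈ M₁, x ≠ x₀ → par x ∈ M₁)
    (hclosed₂ : ∀ x ∈ M₂, x ≠ base → par x ∈ M₂)
    (a : M → ℝ) (habase : a base = 0)
    (a₂ : M → ℝ) (ha₂ : a₂ = fun y => if y = x₀ then ∑ z ∈ M₁, a z else a y) :
    ∑ x ∈ Finset.univ.erase base,
        |(∑ y ∈ Finset.univ.filter (fun y => ∃ k, par^[k] y = x), a y) * d (par x) x| ^ p
      = (∑ x ∈ M₁.erase x₀,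
          |(∑ y ∈ M₁.filter (fun y => ∃ k, par^[k] y = x), a y) * d (par x) x| ^ p)
        + ∑ x ∈ M₂.erase base,
            |(∑ y ∈ M₂.filter (fun y => ∃ k, par^[k] y = x), a₂ y) * d (par x) x| ^ p := by
  have hboth : ∀ x, x ∈ M₁ → x ∈ M₂ → x = x₀ := by
    intro x h1 h2
    have : x ∈ M₁ ∩ M₂ := Finset.mem_inter.2 ⟨h1, h2⟩
    rw [hinter] at this
    exact Finset.mem_singleton.1 this
  have hx₀mem : x₀ ∈ M₁ ∩ M₂ := by rw [hinter]; exact Finset.mem_singleton_self x₀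
  have hx₀₁ : x₀ ∈ M₁ := (Finset.mem_inter.1 hx₀mem).1
  have hx₀₂ : x₀ ∈ M₂ := (Finset.mem_inter.1 hx₀mem).2
  have hbase1 : base ∉ M₁ := fun h => hx₀ (hboth base h hbase).symm
  have hmem : ∀ y : M, y ∈ M₁ ∨ y ∈ M₂ := by
    intro y
    have : y ∈ M₁ ∪ M₂ := by rw [hunion]; exact Finset.mem_univ y
    exact Finset.mem_union.1 this
  have orbit₂ : ∀ k, ∀ y ∈ M₂, par^[k] y ∈ M₂ := by
    intro k
    induction k with
    | zero => intro y hy; simpa using hy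
    | succ k ih =>
      intro y hy
      rw [Function.iterate_succ_apply]
      apply ih
      by_cases h : y = base
      · subst h; rw [hpar0]; exact hbase
      · exact hclosed₂ y hy h
  have reach_x₀_aux : ∀ k y, y ∈ M₁ → par^[k] y = base → ∃ j, par^[j] y = x₀ := by
    intro k
    induction k with
    | zero =>
      intro y hy hk
      simp only [Function.iterate_zero_apply] at hk
      exact absurd (hk ▸ hy) hbase1
    | succ k ih =>
      intro y hy hk
      by_cases h : y = x₀
      · exact ⟨0, by simp [h]⟩
      · obtain ⟨j, hj⟩ := ih (par y) (hclosed₁ y hy h)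
          (by rwa [Function.iterate_succ_apply] at hk)
        exact ⟨j + 1, by rwa [Function.iterate_succ_apply]⟩
  have reach_x₀ : ∀ y ∈ M₁, ∃ j, par^[j] y = x₀ := by
    intro y hy
    obtain ⟨k, hk⟩ := hreach y
    exact reach_x₀_aux k y hy hk
  have toM₂ : ∀ k y, y ∈ M₁ → ∀ x, par^[k] y = x → x ∈ M₂ → ∃ m, par^[m] x₀ = x := by
    intro k
    induction k with
    | zero =>
      intro y hy x hk hx
      simp only [Function.iterate_zero_apply] at hk
      subst hk
      exact ⟨0, by simp [hboth y hy hx]⟩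
    | succ k ih =>
      intro y hy x hk hx
      by_cases h : y = x₀
      · exact ⟨k + 1, h ▸ hk⟩
      · exact ih (par y) (hclosed₁ y hy h) x
          (by rwa [Function.iterate_succ_apply] at hk) hx
  have reach_iff : ∀ y ∈ M₁, ∀ x ∈ M₂,
      (∃ k, par^[k] y = x) ↔ (∃ k, par^[k] x₀ = x) := by
    intro y hy x hx
    constructor
    · rintro ⟨k, hk⟩; exact toM₂ k y hy x hk hx
    · rintro ⟨m, hm⟩
      obtain ⟨j, hj⟩ := reach_x₀ y hy
      exact ⟨m + j, by rw [Function.iterate_add_apply, hj, hm]⟩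
  -- splitting the outer sum
  have hsplit : (Finset.univ.erase base) = (M₁.erase x₀) ∪ (M₂.erase base) := by
    ext z
    simp only [Finset.mem_erase, Finset.mem_union, Finset.mem_univ, and_true]
    constructor
    · intro hz
      rcases hmem z with h | h
      · by_cases hzx : z = x₀
        · right; exact ⟨hz, hzx ▸ hx₀₂⟩
        · left; exact ⟨hzx, h⟩
      · right; exact ⟨hz, h⟩
    · rintro (⟨hzx, hz⟩ | ⟨hz, _⟩)
      · exact fun hb => hbase1 (hb ▸ hz)
      · exact hz
  have hdisj : Disjoint (M₁.erase x₀) (M₂.erase base) := by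
    rw [Finset.disjoint_left]
    intro z hz1 hz2
    obtain ⟨hzx, hz1'⟩ := Finset.mem_erase.1 hz1
    obtain ⟨_, hz2'⟩ := Finset.mem_erase.1 hz2
    exact hzx (hboth z hz1' hz2')
  -- first part: the subtree of an x ∈ M₁ \ {x₀} lies in M₁
  have hfil1 : ∀ x ∈ M₁.erase x₀,
      Finset.univ.filter (fun y => ∃ k, par^[k] y = x)
        = M₁.filter (fun y => ∃ k, par^[k] y = x) := by
    intro x hx
    obtain ⟨hxx₀, hxM₁⟩ := Finset.mem_erase.1 hx
    ext y
    simp only [Finset.mem_filter, Finset.mem_univ, true_and]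
    constructor
    · rintro ⟨k, hk⟩
      refine ⟨?_, k, hk⟩
      rcases hmem y with h | h
      · exact h
      · exact absurd (hboth x hxM₁ (hk ▸ orbit₂ k y h)) hxx₀
    · exact fun h => h.2
  -- second part
  have hfil2 : ∀ x ∈ M₂.erase base,
      (∑ y ∈ Finset.univ.filter (fun y => ∃ k, par^[k] y = x), a y)
        = ∑ y ∈ M₂.filter (fun y => ∃ k, par^[k] y = x),
            (if y = x₀ then ∑ z ∈ M₁, a z else a y) := by
    intro x hx
    obtain ⟨hxb, hxM₂⟩ := Finset.mem_erase.1 hx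
    have huniv : (Finset.univ : Finset M) = (M₁.erase x₀) ∪ M₂ := by
      ext z
      simp only [Finset.mem_univ, Finset.mem_union, Finset.mem_erase, true_iff]
      rcases hmem z with h | h
      · by_cases hzx : z = x₀
        · right; exact hzx ▸ hx₀₂
        · left; exact ⟨hzx, h⟩
      · right; exact h
    have hdisj2 : Disjoint (M₁.erase x₀) M₂ := by
      rw [Finset.disjoint_left]
      intro z hz hz2
      obtain ⟨hzx, hz1⟩ := Finset.mem_erase.1 hz
      exact hzx (hboth z hz1 hz2)
    rw [huniv, Finset.filter_union,
      Finset.sum_union (Finset.disjoint_filter_filter hdisj2)]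
    by_cases hP : ∃ k, par^[k] x₀ = x
    · have hall : (M₁.erase x₀).filter (fun y => ∃ k, par^[k] y = x) = M₁.erase x₀ := by
        apply Finset.filter_true_of_mem
        intro y hy
        exact (reach_iff y (Finset.mem_erase.1 hy).2 x hxM₂).2 hP
      have hx₀fil : x₀ ∈ M₂.filter (fun y => ∃ k, par^[k] y = x) :=
        Finset.mem_filter.2 ⟨hx₀₂, hP⟩
      rw [hall]
      rw [← Finset.add_sum_erase _ a hx₀fil,
        ← Finset.add_sum_erase _ (fun y => if y = x₀ then ∑ z ∈ M₁, a z else a y) hx₀fil]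
      have h1 : ∑ y ∈ M₁.erase x₀, a y = (∑ z ∈ M₁, a z) - a x₀ := by
        rw [← Finset.add_sum_erase _ a hx₀₁]; ring
      have h2 : ∑ y ∈ (M₂.filter (fun y => ∃ k, par^[k] y = x)).erase x₀,
            (if y = x₀ then ∑ z ∈ M₁, a z else a y)
          = ∑ y ∈ (M₂.filter (fun y => ∃ k, par^[k] y = x)).erase x₀, a y := by
        apply Finset.sum_congr rfl
        intro y hy
        rw [if_neg (Finset.mem_erase.1 hy).1]
      rw [h1, h2, if_pos rfl]
      ring
    · have hnone : (M₁.erase x₀).filter (fun y => ∃ k, par^[k] y = x) = ∅ := by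
        apply Finset.filter_false_of_mem
        intro y hy
        exact fun h => hP ((reach_iff y (Finset.mem_erase.1 hy).2 x hxM₂).1 h)
      rw [hnone, Finset.sum_empty, zero_add]
      apply Finset.sum_congr rfl
      intro y hy
      have hyne : y ≠ x₀ := by
        intro h
        exact hP (h ▸ (Finset.mem_filter.1 hy).2)
      rw [if_neg hyne]
  -- assemble
  rw [hsplit, Finset.sum_union hdisj]
  congr 1
  · exact Finset.sum_congr rfl fun x hx => by rw [hfil1 x hx]
  · refine Finset.sum_congr rfl fun x hx => ?_
    rw [hfil2 x hx, ha₂]
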